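/- Let λ : 𝕋^d → ℝ satisfy 1/D ≤ λ_b ≤ q < 1 for all b (D ≥ 1) and be Hölder with exponent α and constant C_λ. Let A : 𝕋^d → 𝕋^d satisfy dist(Ab₁, Ab₂) ≤ μ dist(b₁,b₂) with μ > 1 and μ^α > 1, and set θ = μ^α q and B = θ/((μ^α − 1) q) + 2. Then for every n ≥ 0 the function P_n(b) = Π_n(b)/λ_{A^n b} is Hölder with exponent α and |P_n(b₁) − P_n(b₂)| ≤ D² C_λ B θ^n dist(b₁,b₂)^α for all b₁, b₂ ∈ 𝕋^d. -/

import Mathlib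

open Set Function

noncomputable section

/-- The `d`-dimensional torus `ℝ^d/ℤ^d` with the (sup-)product metric. -/
abbrev Torus (d : ℕ) := Fin d → AddCircle (1 : ℝ)

/-- `Π_n(b) = λ_b λ_{Ab} ⋯ λ_{A^{n-1}b}` (and `Π_0(b) = 1`). -/
def PiProd {d : ℕ} (A : Torus d → Torus d) (lam : Torus d → ℝ) (n : ℕ) (b : Torus d) : ℝ :=
  ∏ k ∈ Finset.range n, lam (A^[k] b)

/-- `P_n(b) = Π_n(b) / λ_{A^n b}`. -/
def Pfun {d : ℕ} (A : Torus d → Torus d) (lam : Torus d → ℝ) (n : ℕ) (b : Torus d) : ℝ :=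
  PiProd A lam n b / lam (A^[n] b)

/-- Hölder property of `P_n = Π_n/λ_{A^n b}`:
`|P_n(b₁) − P_n(b₂)| ≤ D² C_λ B θ^n dist(b₁,b₂)^α`, where `θ = μ^α q` and
`B = θ/((μ^α − 1) q) + 2`. -/
theorem statement12 {d : ℕ} (A : Torus d → Torus d) (lam : Torus d → ℝ)
    (q D : ℝ) (hq : q < 1) (hD : 1 ≤ D)
    (hlam : ∀ b, 1 / D ≤ lam b ∧ lam b ≤ q)
    (α Clam μ : ℝ) (hμ : 1 < μ) (hμα : 1 < μ ^ α)
    (hA : ∀ b₁ b₂ : Torus d, dist (A b₁) (A b₂) ≤ μ * dist b₁ b₂)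
    (hHol : ∀ b₁ b₂ : Torus d, |lam b₁ - lam b₂| ≤ Clam * dist b₁ b₂ ^ α) :
    ∀ n : ℕ, ∀ b₁ b₂ : Torus d,
      |Pfun A lam n b₁ - Pfun A lam n b₂| ≤
        D ^ 2 * Clam * (μ ^ α * q / ((μ ^ α - 1) * q) + 2) * (μ ^ α * q) ^ n
          * dist b₁ b₂ ^ α := by
  have hD0 : (0 : ℝ) < D := lt_of_lt_of_le one_pos hD
  have hμ0 : (0 : ℝ) < μ := lt_trans one_pos hμ
  have hα : 0 < α := by
    by_contra h
    push_neg at h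
    have := Real.rpow_le_one_of_one_le_of_nonpos hμ.le h
    linarith
  set t := μ ^ α with ht
  have ht1 : (1 : ℝ) < t := hμα
  have ht0 : (0 : ℝ) < t := lt_trans one_pos ht1
  -- positivity of lam and q
  have hlam_pos : ∀ b, 0 < lam b := fun b =>
    lt_of_lt_of_le (by positivity) (hlam b).1
  have hq0 : (0 : ℝ) < q := by
    have b0 : Torus d := fun _ => 0
    exact lt_of_lt_of_le (hlam_pos b0) (hlam b0).2
  have hDq : (1 : ℝ) ≤ D * q := by
    have b0 : Torus d := fun _ => 0
    have h1 : 1 / D ≤ q := le_trans (hlam b0).1 (hlam b0).2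
    rw [div_le_iff₀ hD0] at h1
    linarith [h1]
  have hinvD : ∀ b, 1 / lam b ≤ D := by
    intro b
    rw [div_le_iff₀ (hlam_pos b)]
    have := (hlam b).1
    rw [div_le_iff₀ hD0] at this
    linarith
  -- bounds on PiProd
  have hPi_pos : ∀ (m : ℕ) (b : Torus d), 0 < PiProd A lam m b := by
    intro m b
    exact Finset.prod_pos fun k _ => hlam_pos _
  have hPi_le : ∀ (m : ℕ) (b : Torus d), PiProd A lam m b ≤ q ^ m := by
    intro m b
    calc PiProd A lam m b ≤ ∏ _k ∈ Finset.range m, q :=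
          Finset.prod_le_prod (fun k _ => (hlam_pos _).le) (fun k _ => (hlam _).2)
      _ = q ^ m := by simp
  intro n b₁ b₂
  by_cases hbb : b₁ = b₂
  · subst hbb
    simp [dist_self, Real.zero_rpow hα.ne']
  · set δ := dist b₁ b₂ with hδdef
    have hδ : 0 < δ := dist_pos.2 hbb
    have hρ : 0 < δ ^ α := Real.rpow_pos_of_pos hδ α
    have hClam : 0 ≤ Clam := by
      by_contra h
      push_neg at h
      have h1 : Clam * δ ^ α < 0 := mul_neg_of_neg_of_pos h hρ
      have h2 := (abs_nonneg (lam b₁ - lam b₂)).trans (hHol b₁ b₂)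
      linarith
    -- iterated distance bound
    have hdistk : ∀ k : ℕ, dist (A^[k] b₁) (A^[k] b₂) ≤ μ ^ k * δ := by
      intro k
      induction k with
      | zero => simp [hδdef]
      | succ k ih =>
        rw [Function.iterate_succ_apply', Function.iterate_succ_apply']
        calc dist (A (A^[k] b₁)) (A (A^[k] b₂)) ≤ μ * dist (A^[k] b₁) (A^[k] b₂) :=
              hA _ _
          _ ≤ μ * (μ ^ k * δ) := by
              exact mul_le_mul_of_nonneg_left ih hμ0.le
          _ = μ ^ (k + 1) * δ := by ring
    -- Hölder along the orbit
    have hlamk : ∀ k : ℕ, |lam (A^[k] b₁) - lam (A^[k] b₂)| ≤ Clam * (t ^ k * δ ^ α) := by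
      intro k
      have h1 : dist (A^[k] b₁) (A^[k] b₂) ^ α ≤ (μ ^ k * δ) ^ α :=
        Real.rpow_le_rpow dist_nonneg (hdistk k) hα.le
      have h2 : (μ ^ k * δ) ^ α = t ^ k * δ ^ α := by
        rw [Real.mul_rpow (by positivity) hδ.le, ht, ← Real.rpow_natCast μ k,
          ← Real.rpow_natCast (μ ^ α) k, ← Real.rpow_mul hμ0.le, ← Real.rpow_mul hμ0.le,
          mul_comm α (k : ℝ)]
      calc |lam (A^[k] b₁) - lam (A^[k] b₂)| ≤ Clam * dist (A^[k] b₁) (A^[k] b₂) ^ α :=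
            hHol _ _
        _ ≤ Clam * (t ^ k * δ ^ α) := by
            rw [← h2]; exact mul_le_mul_of_nonneg_left h1 hClam
    -- key induction for PiProd
    have key : ∀ m : ℕ, |PiProd A lam m b₁ - PiProd A lam m b₂| ≤
        Clam * δ ^ α * (D * q ^ m * ∑ k ∈ Finset.range m, t ^ k) := by
      intro m
      induction m with
      | zero => simp [PiProd]
      | succ m ih =>
        have e : ∀ b : Torus d, PiProd A lam (m + 1) b = PiProd A lam m b * lam (A^[m] b) := by
          intro b; rw [PiProd, Finset.prod_range_succ]; rfl
        have hsplit : PiProd A lam (m + 1) b₁ - PiProd A lam (m + 1) b₂ =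
            (PiProd A lam m b₁ - PiProd A lam m b₂) * lam (A^[m] b₁)
              + PiProd A lam m b₂ * (lam (A^[m] b₁) - lam (A^[m] b₂)) := by
          rw [e, e]; ring
        have hqm : (0 : ℝ) ≤ q ^ m := by positivity
        have h1 : |(PiProd A lam m b₁ - PiProd A lam m b₂) * lam (A^[m] b₁)| ≤
            (Clam * δ ^ α * (D * q ^ m * ∑ k ∈ Finset.range m, t ^ k)) * q := by
          rw [abs_mul, abs_of_pos (hlam_pos _)]
          exact mul_le_mul ih (hlam _).2 (hlam_pos _).le
            (le_trans (abs_nonneg _) ih)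
        have h2 : |PiProd A lam m b₂ * (lam (A^[m] b₁) - lam (A^[m] b₂))| ≤
            q ^ m * (Clam * (t ^ m * δ ^ α)) := by
          rw [abs_mul, abs_of_pos (hPi_pos m b₂)]
          exact mul_le_mul (hPi_le m b₂) (hlamk m) (abs_nonneg _) hqm
        have h3 : q ^ m * (Clam * (t ^ m * δ ^ α)) ≤
            Clam * δ ^ α * (D * q ^ (m + 1) * t ^ m) := by
          have hqm1 : q ^ m ≤ D * q ^ (m + 1) := by
            calc q ^ m = 1 * q ^ m := (one_mul _).symm
              _ ≤ (D * q) * q ^ m := by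
                  exact mul_le_mul_of_nonneg_right hDq hqm
              _ = D * q ^ (m + 1) := by ring
          calc q ^ m * (Clam * (t ^ m * δ ^ α)) ≤
                (D * q ^ (m + 1)) * (Clam * (t ^ m * δ ^ α)) := by
                exact mul_le_mul_of_nonneg_right hqm1 (by positivity)
            _ = Clam * δ ^ α * (D * q ^ (m + 1) * t ^ m) := by ring
        calc |PiProd A lam (m + 1) b₁ - PiProd A lam (m + 1) b₂| ≤
              |(PiProd A lam m b₁ - PiProd A lam m b₂) * lam (A^[m] b₁)|
                + |PiProd A lam m b₂ * (lam (A^[m] b₁) - lam (A^[m] b₂))| := by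
              rw [hsplit]; exact abs_add_le _ _
          _ ≤ (Clam * δ ^ α * (D * q ^ m * ∑ k ∈ Finset.range m, t ^ k)) * q
                + Clam * δ ^ α * (D * q ^ (m + 1) * t ^ m) :=
              add_le_add h1 (le_trans h2 h3)
          _ = Clam * δ ^ α * (D * q ^ (m + 1) * ((∑ k ∈ Finset.range m, t ^ k) + t ^ m)) := by
              ring
          _ = Clam * δ ^ α * (D * q ^ (m + 1) * ∑ k ∈ Finset.range (m + 1), t ^ k) := by
              rw [Finset.sum_range_succ]
    -- geometric sum bound
    have hgeom : ∀ m : ℕ, (∑ k ∈ Finset.range m, t ^ k) ≤ t ^ m / (t - 1) := by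
      intro m
      rw [geom_sum_eq ht1.ne' m]
      have ht1' : (0 : ℝ) < t - 1 := by linarith
      gcongr
      linarith
    -- final assembly
    set Pi1 := PiProd A lam n b₁ with hPi1
    set Pi2 := PiProd A lam n b₂ with hPi2
    set l₁ := lam (A^[n] b₁) with hl₁
    set l₂ := lam (A^[n] b₂) with hl₂
    have hl₁0 : 0 < l₁ := hlam_pos _
    have hl₂0 : 0 < l₂ := hlam_pos _
    have hsplitP : Pfun A lam n b₁ - Pfun A lam n b₂ =
        (Pi1 - Pi2) * (1 / l₁) + Pi2 * ((l₂ - l₁) / (l₁ * l₂)) := by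
      rw [Pfun, Pfun, ← hPi1, ← hPi2, ← hl₁, ← hl₂]
      field_simp
      ring
    have hA1 : |(Pi1 - Pi2) * (1 / l₁)| ≤ |Pi1 - Pi2| * D := by
      rw [abs_mul, abs_of_pos (by positivity : (0:ℝ) < 1 / l₁)]
      exact mul_le_mul_of_nonneg_left (hinvD _) (abs_nonneg _)
    have h12 : 1 / (l₁ * l₂) ≤ D ^ 2 := by
      rw [div_le_iff₀ (by positivity)]
      have e1 : 1 ≤ D * l₁ := by
        have := (hlam (A^[n] b₁)).1; rw [div_le_iff₀ hD0] at this; linarith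
      have e2 : 1 ≤ D * l₂ := by
        have := (hlam (A^[n] b₂)).1; rw [div_le_iff₀ hD0] at this; linarith
      nlinarith [mul_le_mul e1 e2 one_pos.le (by positivity : (0:ℝ) ≤ D * l₁)]
    have hA2 : |Pi2 * ((l₂ - l₁) / (l₁ * l₂))| ≤ q ^ n * (Clam * (t ^ n * δ ^ α)) * D ^ 2 := by
      rw [abs_mul, abs_div, abs_of_pos (hPi_pos n b₂), abs_of_pos (mul_pos hl₁0 hl₂0)]
      have hl : |l₂ - l₁| ≤ Clam * (t ^ n * δ ^ α) := by
        rw [abs_sub_comm]; exact hlamk n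
      calc Pi2 * (|l₂ - l₁| / (l₁ * l₂)) = Pi2 * (|l₂ - l₁| * (1 / (l₁ * l₂))) := by ring
        _ ≤ q ^ n * ((Clam * (t ^ n * δ ^ α)) * D ^ 2) := by
            apply mul_le_mul (hPi_le n b₂) ?_ (by positivity) (by positivity)
            exact mul_le_mul hl h12 (by positivity) (by positivity)
        _ = q ^ n * (Clam * (t ^ n * δ ^ α)) * D ^ 2 := by ring
    have hbound1 : |Pi1 - Pi2| ≤ Clam * δ ^ α * (D * q ^ n * (t ^ n / (t - 1))) := by
      refine (key n).trans ?_
      gcongr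
      exact hgeom n
    have hsimp : t * q / ((t - 1) * q) + 2 = t / (t - 1) + 2 := by
      rw [mul_div_mul_right _ _ hq0.ne']
    rw [hsimp]
    have ht1' : (0 : ℝ) < t - 1 := by linarith
    calc |Pfun A lam n b₁ - Pfun A lam n b₂|
        ≤ |(Pi1 - Pi2) * (1 / l₁)| + |Pi2 * ((l₂ - l₁) / (l₁ * l₂))| := by
          rw [hsplitP]; exact abs_add_le _ _
      _ ≤ |Pi1 - Pi2| * D + q ^ n * (Clam * (t ^ n * δ ^ α)) * D ^ 2 := add_le_add hA1 hA2
      _ ≤ (Clam * δ ^ α * (D * q ^ n * (t ^ n / (t - 1)))) * D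
            + q ^ n * (Clam * (t ^ n * δ ^ α)) * D ^ 2 := by
          gcongr
      _ = D ^ 2 * Clam * (1 / (t - 1) + 1) * (t * q) ^ n * δ ^ α := by
          rw [mul_pow]; field_simp
      _ ≤ D ^ 2 * Clam * (t / (t - 1) + 2) * (t * q) ^ n * δ ^ α := by
          gcongr
          · have h1 : 1 / (t - 1) ≤ t / (t - 1) := by gcongr
            linarith
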